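/- Let P, Q ⊆ ℝ² and t > 0. Define P̃ = {(⌈p.x/t⌉, ⌈p.y/t⌉) : p ∈ P}, Q̃ similarly, let S' be the Pareto sum of P̃ and Q̃, and S̃ the Pareto front of {t·s' : s' ∈ S'}. Then for every s̃ ∈ S̃ there exist p ∈ P, q ∈ Q with p+q ≤ s̃ ≤ p+q+(2t,2t) coordinatewise. -/
import Mathlib


/-- The Pareto front of a set: its non-dominated points. -/
def paretoFront {α : Type*} [LE α] (T : Set α) : Set α :=
  {s ∈ T | ∀ u ∈ T, ¬(u ≤ s ∧ u ≠ s)}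

/-- The Minkowski sum of two sets. -/
def mink {α : Type*} [Add α] (P Q : Set α) : Set α :=
  {s | ∃ p ∈ P, ∃ q ∈ Q, s = p + q}

lemma ceil_bounds (t x : ℝ) (ht : 0 < t) :
    x ≤ t * ⌈x / t⌉ ∧ t * ⌈x / t⌉ ≤ x + t := by
  constructor
  · have h := Int.le_ceil (x / t)
    calc x = t * (x / t) := by field_simp
    _ ≤ t * ⌈x / t⌉ := by nlinarith
  · have h := Int.ceil_lt_add_one (x / t)
    have : t * ⌈x / t⌉ ≤ t * (x / t + 1) := by nlinarith
    calc t * (⌈x / t⌉ : ℝ) ≤ t * (x / t + 1) := this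
    _ = x + t := by field_simp

/-- With ceiling-rounded sets `P̃, Q̃`, the Pareto sum `S'` of
`P̃, Q̃`, and `S̃` the Pareto front of `{t·s' : s' ∈ S'}`: every `st ∈ S̃`
satisfies `p + q ≤ st ≤ p + q + (2t,2t)` for some `p ∈ P`, `q ∈ Q`. -/
theorem weak_approx_soundness (t : ℝ) (ht : 0 < t) (P Q : Set (ℝ × ℝ)) :
    ∀ st ∈ paretoFront ((fun s' : ℤ × ℤ => ((t * s'.1, t * s'.2) : ℝ × ℝ)) ''
      paretoFront (mink ((fun x : ℝ × ℝ => ((⌈x.1 / t⌉, ⌈x.2 / t⌉) : ℤ × ℤ)) '' P)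
                        ((fun x : ℝ × ℝ => ((⌈x.1 / t⌉, ⌈x.2 / t⌉) : ℤ × ℤ)) '' Q))),
      ∃ p ∈ P, ∃ q ∈ Q, p + q ≤ st ∧ st ≤ p + q + (2 * t, 2 * t) := by
  intro st hst
  obtain ⟨⟨s', hs', rfl⟩, -⟩ := hst
  obtain ⟨⟨p', ⟨p, hp, rfl⟩, q', ⟨q, hq, rfl⟩, rfl⟩, -⟩ := hs'
  refine ⟨p, hp, q, hq, ?_, ?_⟩ <;>
    simp only [Prod.le_def, Prod.fst_add, Prod.snd_add] <;>
    constructor <;>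
    · simp only [Int.cast_add]
      have h1 := ceil_bounds t p.1 ht
      have h2 := ceil_bounds t p.2 ht
      have h3 := ceil_bounds t q.1 ht
      have h4 := ceil_bounds t q.2 ht
      push_cast at *
      nlinarith [h1.1, h1.2, h2.1, h2.2, h3.1, h3.2, h4.1, h4.2]
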